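/- arXiv:1606.02377 — 4 statements merged into one kernel-verified Lean document; each statement's English description precedes it below -/
import Mathlib

section
/- Let n ≥ 1 and let T = (T^{kl}_{ij}) (i,j,k,l = 1,…,n) be a real array symmetric in the pair (i,j) and in the pair (k,l). Set Q(ξ,η) = Σ_{i,j,k,l} T^{kl}_{ij} ξ_i ξ_j η_k η_l and Λ = sup{ |Σ_{i,j,k,l} T^{kl}_{ij} a_i b_j η_k η_l| : a,b,η ∈ ℝ^n, |a| = |b| = |η| = 1 }. If Q(ξ,η) ≥ 0 for all ξ, η ∈ ℝ^n with ξ·η = 0, then Q(ξ,η) ≥ −3Λ|ξ||η||ξ·η| for all ξ, η ∈ ℝ^n. (This is the equivalent quantitative form of the regularity (co-dimension one convexity) condition used in inequality (2.2) of the paper.) -/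
open scoped BigOperators

section Aux

variable {n : ℕ}

/-- The trilinear-type form underlying `Q`. -/
def Bf (T : Fin n → Fin n → Fin n → Fin n → ℝ) (a b c : Fin n → ℝ) : ℝ :=
  ∑ i, ∑ j, ∑ k, ∑ l, T i j k l * a i * b j * c k * c l

/-- Euclidean norm. -/
noncomputable def nrm (a : Fin n → ℝ) : ℝ := Real.sqrt (∑ i, a i ^ 2)

lemma Bf_smul1 (T : Fin n → Fin n → Fin n → Fin n → ℝ) (r : ℝ) (a b c : Fin n → ℝ) :
    Bf T (fun i => r * a i) b c = r * Bf T a b c := by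
  simp only [Bf, Finset.mul_sum]
  exact Finset.sum_congr rfl fun i _ => Finset.sum_congr rfl fun j _ =>
    Finset.sum_congr rfl fun k _ => Finset.sum_congr rfl fun l _ => by ring

lemma Bf_smul2 (T : Fin n → Fin n → Fin n → Fin n → ℝ) (r : ℝ) (a b c : Fin n → ℝ) :
    Bf T a (fun i => r * b i) c = r * Bf T a b c := by
  simp only [Bf, Finset.mul_sum]
  exact Finset.sum_congr rfl fun i _ => Finset.sum_congr rfl fun j _ =>
    Finset.sum_congr rfl fun k _ => Finset.sum_congr rfl fun l _ => by ring

lemma Bf_smul3 (T : Fin n → Fin n → Fin n → Fin n → ℝ) (r : ℝ) (a b c : Fin n → ℝ) :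
    Bf T a b (fun i => r * c i) = r ^ 2 * Bf T a b c := by
  simp only [Bf, Finset.mul_sum]
  exact Finset.sum_congr rfl fun i _ => Finset.sum_congr rfl fun j _ =>
    Finset.sum_congr rfl fun k _ => Finset.sum_congr rfl fun l _ => by ring

lemma Bf_expand (T : Fin n → Fin n → Fin n → Fin n → ℝ) (t : ℝ) (u v c : Fin n → ℝ) :
    Bf T (fun i => u i + t * v i) (fun i => u i + t * v i) c
      = Bf T u u c + t * Bf T u v c + t * Bf T v u c + t ^ 2 * Bf T v v c := by
  simp only [Bf, Finset.mul_sum, ← Finset.sum_add_distrib]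
  exact Finset.sum_congr rfl fun i _ => Finset.sum_congr rfl fun j _ =>
    Finset.sum_congr rfl fun k _ => Finset.sum_congr rfl fun l _ => by ring

lemma Bf_symm (T : Fin n → Fin n → Fin n → Fin n → ℝ)
    (hsym₁ : ∀ i j k l, T i j k l = T j i k l) (a b c : Fin n → ℝ) :
    Bf T a b c = Bf T b a c := by
  rw [Bf, Bf, Finset.sum_comm]
  exact Finset.sum_congr rfl fun i _ => Finset.sum_congr rfl fun j _ =>
    Finset.sum_congr rfl fun k _ => Finset.sum_congr rfl fun l _ => by
      rw [hsym₁]; ring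

lemma Bf_zero1 (T : Fin n → Fin n → Fin n → Fin n → ℝ) {a : Fin n → ℝ} (b c : Fin n → ℝ)
    (h : ∀ i, a i = 0) : Bf T a b c = 0 :=
  Finset.sum_eq_zero fun i _ => Finset.sum_eq_zero fun j _ =>
    Finset.sum_eq_zero fun k _ => Finset.sum_eq_zero fun l _ => by simp [h i]

lemma Bf_zero2 (T : Fin n → Fin n → Fin n → Fin n → ℝ) (a : Fin n → ℝ) {b : Fin n → ℝ}
    (c : Fin n → ℝ) (h : ∀ i, b i = 0) : Bf T a b c = 0 :=
  Finset.sum_eq_zero fun i _ => Finset.sum_eq_zero fun j _ =>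
    Finset.sum_eq_zero fun k _ => Finset.sum_eq_zero fun l _ => by simp [h j]

lemma Bf_zero3 (T : Fin n → Fin n → Fin n → Fin n → ℝ) (a b : Fin n → ℝ) {c : Fin n → ℝ}
    (h : ∀ i, c i = 0) : Bf T a b c = 0 :=
  Finset.sum_eq_zero fun i _ => Finset.sum_eq_zero fun j _ =>
    Finset.sum_eq_zero fun k _ => Finset.sum_eq_zero fun l _ => by simp [h k]

lemma nrm_nonneg (a : Fin n → ℝ) : 0 ≤ nrm a := Real.sqrt_nonneg _

lemma sum_sq_nonneg (a : Fin n → ℝ) : 0 ≤ ∑ i, a i ^ 2 :=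
  Finset.sum_nonneg fun i _ => sq_nonneg _

lemma nrm_sq (a : Fin n → ℝ) : nrm a ^ 2 = ∑ i, a i ^ 2 :=
  Real.sq_sqrt (sum_sq_nonneg a)

lemma nrm_eq_zero {a : Fin n → ℝ} (h : nrm a = 0) : ∀ i, a i = 0 := by
  intro i
  have h0 : ∑ j, a j ^ 2 = 0 := by
    have := nrm_sq a; rw [h] at this; linarith [this.symm]
  have := (Finset.sum_eq_zero_iff_of_nonneg (fun j _ => sq_nonneg (a j))).mp h0 i
    (Finset.mem_univ i)
  exact (pow_eq_zero_iff two_ne_zero).mp this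

lemma nrm_smul (r : ℝ) (a : Fin n → ℝ) : nrm (fun i => r * a i) = |r| * nrm a := by
  unfold nrm
  rw [show ∑ i, (r * a i) ^ 2 = r ^ 2 * ∑ i, a i ^ 2 by
    rw [Finset.mul_sum]; exact Finset.sum_congr rfl fun i _ => by ring]
  rw [Real.sqrt_mul (sq_nonneg r), Real.sqrt_sq_eq_abs]

lemma coord_le_one {a : Fin n → ℝ} (ha : nrm a = 1) (i : Fin n) : |a i| ≤ 1 := by
  have hs : ∑ j, a j ^ 2 = 1 := Real.sqrt_eq_one.mp ha
  have h1 : a i ^ 2 ≤ 1 := by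
    calc a i ^ 2 ≤ ∑ j, a j ^ 2 :=
          Finset.single_le_sum (fun j _ => sq_nonneg (a j)) (Finset.mem_univ i)
      _ = 1 := hs
  calc |a i| = Real.sqrt (a i ^ 2) := (Real.sqrt_sq_eq_abs _).symm
    _ ≤ Real.sqrt 1 := Real.sqrt_le_sqrt h1
    _ = 1 := Real.sqrt_one

end Aux

/-- the equivalent quantitative form of the regularity
(co-dimension one convexity) condition. -/
theorem regular_implies_quantitative_lower_bound
    (n : ℕ) (hn : 1 ≤ n)
    (T : Fin n → Fin n → Fin n → Fin n → ℝ)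
    (hsym₁ : ∀ i j k l, T i j k l = T j i k l)
    (hsym₂ : ∀ i j k l, T i j k l = T i j l k)
    (Q : (Fin n → ℝ) → (Fin n → ℝ) → ℝ)
    (hQ : ∀ ξ η, Q ξ η = ∑ i, ∑ j, ∑ k, ∑ l, T i j k l * ξ i * ξ j * η k * η l)
    (Λ : ℝ)
    (hΛ : Λ = sSup {s : ℝ | ∃ a b η : Fin n → ℝ,
        Real.sqrt (∑ i, a i ^ 2) = 1 ∧ Real.sqrt (∑ i, b i ^ 2) = 1 ∧
        Real.sqrt (∑ i, η i ^ 2) = 1 ∧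
        s = |∑ i, ∑ j, ∑ k, ∑ l, T i j k l * a i * b j * η k * η l|})
    (hreg : ∀ ξ η : Fin n → ℝ, (∑ i, ξ i * η i) = 0 → 0 ≤ Q ξ η) :
    ∀ ξ η : Fin n → ℝ,
      -(3 * Λ * Real.sqrt (∑ i, ξ i ^ 2) * Real.sqrt (∑ i, η i ^ 2) *
          |∑ i, ξ i * η i|) ≤ Q ξ η := by
  -- bound on terms of the sup set
  set M : ℝ := ∑ i, ∑ j, ∑ k, ∑ l, |T i j k l| with hM
  clear_value M
  have hterm : ∀ (a b c : Fin n → ℝ), (∀ i, |a i| ≤ 1) → (∀ i, |b i| ≤ 1) →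
      (∀ i, |c i| ≤ 1) → |Bf T a b c| ≤ M := by
    intro a b c ha hb hc
    calc |Bf T a b c| ≤ ∑ i, ∑ j, ∑ k, ∑ l, |T i j k l * a i * b j * c k * c l| := by
          refine (Finset.abs_sum_le_sum_abs _ _).trans (Finset.sum_le_sum fun i _ => ?_)
          refine (Finset.abs_sum_le_sum_abs _ _).trans (Finset.sum_le_sum fun j _ => ?_)
          refine (Finset.abs_sum_le_sum_abs _ _).trans (Finset.sum_le_sum fun k _ => ?_)
          exact Finset.abs_sum_le_sum_abs _ _
      _ ≤ M := by
          rw [hM]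
          refine Finset.sum_le_sum fun i _ => Finset.sum_le_sum fun j _ =>
            Finset.sum_le_sum fun k _ => Finset.sum_le_sum fun l _ => ?_
          rw [abs_mul, abs_mul, abs_mul, abs_mul]
          calc |T i j k l| * |a i| * |b j| * |c k| * |c l|
              ≤ |T i j k l| * 1 * 1 * 1 * 1 := by
                gcongr <;> first | exact ha i | exact hb j | exact hc k | exact hc l
            _ = |T i j k l| := by ring
  -- unit-sphere bound by Λ
  have hΛ_ge : ∀ a b c : Fin n → ℝ, nrm a = 1 → nrm b = 1 → nrm c = 1 →
      |Bf T a b c| ≤ Λ := by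
    intro a b c ha hb hc
    rw [hΛ]
    refine le_csSup ⟨M, ?_⟩ ⟨a, b, c, ha, hb, hc, rfl⟩
    rintro s ⟨a, b, c, ha, hb, hc, rfl⟩
    exact hterm a b c (coord_le_one ha) (coord_le_one hb) (coord_le_one hc)
  -- Λ is nonnegative
  have hΛ0 : 0 ≤ Λ := by
    set e : Fin n → ℝ := fun i => if i = ⟨0, hn⟩ then 1 else 0 with he
    have hne : nrm e = 1 := by
      have : ∑ i, e i ^ 2 = 1 := by
        rw [he]; simp [apply_ite (· ^ 2)]
      rw [nrm, this, Real.sqrt_one]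
    exact (abs_nonneg _).trans (hΛ_ge e e e hne hne hne)
  -- general homogeneous bound
  have key : ∀ a b c : Fin n → ℝ, |Bf T a b c| ≤ Λ * nrm a * nrm b * nrm c ^ 2 := by
    intro a b c
    by_cases ha0 : nrm a = 0
    · rw [Bf_zero1 T b c (nrm_eq_zero ha0), ha0, abs_zero]
      simp
    by_cases hb0 : nrm b = 0
    · rw [Bf_zero2 T a c (nrm_eq_zero hb0), hb0, abs_zero]
      simp
    by_cases hc0 : nrm c = 0
    · rw [Bf_zero3 T a b (nrm_eq_zero hc0), hc0, abs_zero]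
      simp
    have hA : 0 < nrm a := lt_of_le_of_ne (nrm_nonneg a) (Ne.symm ha0)
    have hB : 0 < nrm b := lt_of_le_of_ne (nrm_nonneg b) (Ne.symm hb0)
    have hC : 0 < nrm c := lt_of_le_of_ne (nrm_nonneg c) (Ne.symm hc0)
    set A := nrm a with hAd
    set B := nrm b with hBd
    set C := nrm c with hCd
    clear_value A B C
    set a' : Fin n → ℝ := fun i => (1 / A) * a i with ha'
    set b' : Fin n → ℝ := fun i => (1 / B) * b i with hb'
    set c' : Fin n → ℝ := fun i => (1 / C) * c i with hc'
    clear_value a' b' c'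
    have hna' : nrm a' = 1 := by
      rw [ha', nrm_smul, ← hAd, abs_of_pos (one_div_pos.mpr hA)]
      field_simp
    have hnb' : nrm b' = 1 := by
      rw [hb', nrm_smul, ← hBd, abs_of_pos (one_div_pos.mpr hB)]
      field_simp
    have hnc' : nrm c' = 1 := by
      rw [hc', nrm_smul, ← hCd, abs_of_pos (one_div_pos.mpr hC)]
      field_simp
    have h1 : Bf T a' b' c' = (1 / A) * ((1 / B) * ((1 / C) ^ 2 * Bf T a b c)) := by
      rw [ha', Bf_smul1, hb', Bf_smul2, hc', Bf_smul3]
    have h2 : |Bf T a' b' c'| ≤ Λ := hΛ_ge a' b' c' hna' hnb' hnc'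
    have habs : |Bf T a b c| = A * B * C ^ 2 * |Bf T a' b' c'| := by
      rw [h1, abs_mul, abs_mul, abs_mul,
        abs_of_pos (one_div_pos.mpr hA),
        abs_of_pos (one_div_pos.mpr hB),
        abs_of_pos (pow_pos (one_div_pos.mpr hC) 2)]
      field_simp
    rw [habs]
    calc A * B * C ^ 2 * |Bf T a' b' c'| ≤ A * B * C ^ 2 * Λ :=
          mul_le_mul_of_nonneg_left h2
            (mul_nonneg (mul_nonneg hA.le hB.le) (pow_nonneg hC.le 2))
      _ = Λ * A * B * C ^ 2 := by ring
  -- main argument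
  intro ξ η
  show -(3 * Λ * nrm ξ * nrm η * |∑ i, ξ i * η i|) ≤ Q ξ η
  by_cases hη0 : nrm η = 0
  · have hz := nrm_eq_zero hη0
    have hd0 : ∑ i, ξ i * η i = 0 := Finset.sum_eq_zero fun i _ => by rw [hz i, mul_zero]
    have := hreg ξ η hd0
    rw [hη0, hd0]
    simpa using this
  have hYpos : 0 < nrm η := lt_of_le_of_ne (nrm_nonneg η) (Ne.symm hη0)
  have hXnn : 0 ≤ nrm ξ := nrm_nonneg ξ
  have hsY0 : nrm η ^ 2 = ∑ i, η i ^ 2 := nrm_sq η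
  have hCS0 : |∑ i, ξ i * η i| ≤ nrm ξ * nrm η := by
    have h1 : (∑ i, ξ i * η i) ^ 2 ≤ (∑ i, ξ i ^ 2) * ∑ i, η i ^ 2 :=
      Finset.sum_mul_sq_le_sq_mul_sq _ _ _
    have h2 : (∑ i, ξ i ^ 2) * ∑ i, η i ^ 2 = (nrm ξ * nrm η) ^ 2 := by
      rw [mul_pow, nrm_sq, nrm_sq]
    calc |∑ i, ξ i * η i| = Real.sqrt ((∑ i, ξ i * η i) ^ 2) :=
          (Real.sqrt_sq_eq_abs _).symm
      _ ≤ Real.sqrt ((nrm ξ * nrm η) ^ 2) := Real.sqrt_le_sqrt (by rw [← h2]; exact h1)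
      _ = |nrm ξ * nrm η| := Real.sqrt_sq_eq_abs _
      _ = nrm ξ * nrm η := abs_of_nonneg (mul_nonneg hXnn hYpos.le)
  set X := nrm ξ with hX
  set Y := nrm η with hYdef
  set d : ℝ := ∑ i, ξ i * η i with hd
  set s : ℝ := ∑ i, η i ^ 2 with hs
  have hY : 0 < Y := hYpos
  have hCS : |d| ≤ X * Y := hCS0
  have hsY : Y ^ 2 = s := hsY0
  clear_value X Y d s
  have hspos : 0 < s := by rw [← hsY]; positivity
  set t : ℝ := d / s with ht
  clear_value t
  have hts : t * s = d := by rw [ht]; field_simp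
  set ξ' : Fin n → ℝ := fun i => ξ i - t * η i with hξ'
  clear_value ξ'
  have horth : ∑ i, ξ' i * η i = 0 := by
    have h1 : ∑ i, ξ' i * η i = d - t * s := by
      rw [hd, hs, hξ']
      rw [Finset.mul_sum, ← Finset.sum_sub_distrib]
      exact Finset.sum_congr rfl fun i _ => by ring
    rw [h1, hts, sub_self]
  have hfun : (fun i => ξ' i + t * η i) = ξ := by
    funext i; rw [hξ']; ring
  -- decomposition of Q
  have hQd : Q ξ η = Bf T ξ' ξ' η + 2 * t * Bf T ξ' η η + t ^ 2 * Bf T η η η := by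
    rw [hQ]
    show Bf T ξ ξ η = _
    rw [← hfun, Bf_expand, Bf_symm T hsym₁ η ξ' η]
    ring
  -- first term nonnegative
  have hB1 : 0 ≤ Bf T ξ' ξ' η := by
    have := hreg ξ' η horth
    rwa [hQ] at this
  -- norm comparison
  have hsum : ∑ i, ξ i ^ 2 = ∑ i, ξ' i ^ 2 + 2 * t * (∑ i, ξ' i * η i) + t ^ 2 * s := by
    conv_lhs => rw [← hfun]
    rw [hs, Finset.mul_sum, Finset.mul_sum, ← Finset.sum_add_distrib, ← Finset.sum_add_distrib]
    exact Finset.sum_congr rfl fun i _ => by ring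
  have hX'X0 : nrm ξ' ≤ X := by
    rw [hX]
    unfold nrm
    apply Real.sqrt_le_sqrt
    rw [hsum, horth]
    have := mul_nonneg (sq_nonneg t) hspos.le
    linarith
  have hB2 : |Bf T ξ' η η| ≤ Λ * nrm ξ' * Y * Y ^ 2 := by
    have := key ξ' η η
    rwa [← hYdef] at this
  have hB3 : |Bf T η η η| ≤ Λ * Y * Y * Y ^ 2 := by
    have := key η η η
    rwa [← hYdef] at this
  set X' := nrm ξ' with hX'
  clear_value X'
  have hX'X : X' ≤ X := hX'X0
  have hX'0 : 0 ≤ X' := hX' ▸ nrm_nonneg ξ'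
  have hD0 : 0 ≤ |d| := abs_nonneg d
  have htY : |t| * Y ^ 2 = |d| := by
    calc |t| * Y ^ 2 = |t| * s := by rw [hsY]
      _ = |t| * |s| := by rw [abs_of_pos hspos]
      _ = |t * s| := (abs_mul t s).symm
      _ = |d| := by rw [hts]
  have c2 : -(2 * Λ * X * Y * |d|) ≤ 2 * t * Bf T ξ' η η := by
    have h1 : |2 * t * Bf T ξ' η η| ≤ 2 * Λ * X * Y * |d| := by
      calc |2 * t * Bf T ξ' η η| = 2 * |t| * |Bf T ξ' η η| := by
            rw [abs_mul, abs_mul]; norm_num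
        _ ≤ 2 * |t| * (Λ * X' * Y * Y ^ 2) :=
            mul_le_mul_of_nonneg_left hB2 (by positivity)
        _ = 2 * Λ * X' * Y * (|t| * Y ^ 2) := by ring
        _ = 2 * Λ * X' * Y * |d| := by rw [htY]
        _ ≤ 2 * Λ * X * Y * |d| := by
            have h := mul_le_mul_of_nonneg_left hX'X
              (mul_nonneg (mul_nonneg (mul_nonneg (by norm_num : (0:ℝ) ≤ 2) hΛ0)
                hY.le) hD0)
            nlinarith [h]
    linarith [neg_abs_le (2 * t * Bf T ξ' η η)]
  have c3 : -(Λ * X * Y * |d|) ≤ t ^ 2 * Bf T η η η := by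
    have h1 : |t ^ 2 * Bf T η η η| ≤ Λ * X * Y * |d| := by
      calc |t ^ 2 * Bf T η η η| = |t| ^ 2 * |Bf T η η η| := by
            rw [abs_mul, abs_pow]
        _ ≤ |t| ^ 2 * (Λ * Y * Y * Y ^ 2) :=
            mul_le_mul_of_nonneg_left hB3 (by positivity)
        _ = Λ * (|t| * Y ^ 2) * (|t| * Y ^ 2) := by ring
        _ = Λ * |d| * |d| := by rw [htY]
        _ ≤ Λ * X * Y * |d| := by
            have h := mul_le_mul_of_nonneg_left hCS (mul_nonneg hΛ0 hD0)
            nlinarith [h]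
    linarith [neg_abs_le (t ^ 2 * Bf T η η η)]
  rw [hQd]
  linarith [hB1, c2, c3]
end

section
/- Let n ≥ 1, λ̄ ≥ 0, and let T = (T^{kl}_{ij}) be a real array symmetric in (i,j) and in (k,l) such that Σ_{i,j,k,l} T^{kl}_{ij} ξ_i ξ_j η_k η_l ≥ −2λ̄|ξ||η||ξ·η| for all ξ, η ∈ ℝ^n. Then for every positive semidefinite symmetric matrix F = (F^{ij}), every η ∈ ℝ^n and every ε > 0, one has Σ_{i,j,k,l} F^{ij} T^{kl}_{ij} η_k η_l ≥ −λ̄ ( ε · tr(F) · |η|² + (1/ε) · Σ_{i,j} F^{ij} η_i η_j ). (Inequality (2.3) of the paper.) -/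
open scoped BigOperators

private lemma pull5 {n : ℕ} (f : Fin n → Fin n → Fin n → Fin n → Fin n → ℝ) :
    ∑ i, ∑ j, ∑ k, ∑ l, ∑ m, f i j k l m = ∑ m, ∑ i, ∑ j, ∑ k, ∑ l, f i j k l m := by
  calc ∑ i, ∑ j, ∑ k, ∑ l, ∑ m, f i j k l m
      = ∑ i, ∑ j, ∑ k, ∑ m, ∑ l, f i j k l m :=
        Finset.sum_congr rfl fun i _ => Finset.sum_congr rfl fun j _ =>
          Finset.sum_congr rfl fun k _ => Finset.sum_comm
    _ = ∑ i, ∑ j, ∑ m, ∑ k, ∑ l, f i j k l m :=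
        Finset.sum_congr rfl fun i _ => Finset.sum_congr rfl fun j _ =>
          Finset.sum_comm
    _ = ∑ i, ∑ m, ∑ j, ∑ k, ∑ l, f i j k l m :=
        Finset.sum_congr rfl fun i _ => Finset.sum_comm
    _ = ∑ m, ∑ i, ∑ j, ∑ k, ∑ l, f i j k l m := Finset.sum_comm

private lemma pull3 {n : ℕ} (f : Fin n → Fin n → Fin n → ℝ) :
    ∑ i, ∑ j, ∑ m, f i j m = ∑ m, ∑ i, ∑ j, f i j m := by
  calc ∑ i, ∑ j, ∑ m, f i j m
      = ∑ i, ∑ m, ∑ j, f i j m := Finset.sum_congr rfl fun i _ => Finset.sum_comm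
    _ = ∑ m, ∑ i, ∑ j, f i j m := Finset.sum_comm

/-- inequality (2.3) of the paper. -/
theorem regular_contraction_inequality
    (n : ℕ) (hn : 1 ≤ n)
    (lam : ℝ) (hlam : 0 ≤ lam)
    (T : Fin n → Fin n → Fin n → Fin n → ℝ)
    (hsym₁ : ∀ i j k l, T i j k l = T j i k l)
    (hsym₂ : ∀ i j k l, T i j k l = T i j l k)
    (hreg : ∀ ξ η : Fin n → ℝ,
      -(2 * lam * Real.sqrt (∑ i, ξ i ^ 2) * Real.sqrt (∑ i, η i ^ 2) *
          |∑ i, ξ i * η i|) ≤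
        ∑ i, ∑ j, ∑ k, ∑ l, T i j k l * ξ i * ξ j * η k * η l) :
    ∀ F : Matrix (Fin n) (Fin n) ℝ, F.PosSemidef →
      ∀ η : Fin n → ℝ, ∀ ε : ℝ, 0 < ε →
        -(lam * (ε * Matrix.trace F * (∑ i, η i ^ 2) +
            (1 / ε) * ∑ i, ∑ j, F i j * η i * η j)) ≤
          ∑ i, ∑ j, ∑ k, ∑ l, F i j * T i j k l * η k * η l := by
  intro F hF η ε hε
  open scoped MatrixOrder in
  obtain ⟨B, hB⟩ := CStarAlgebra.nonneg_iff_eq_star_mul_self.mp hF.nonneg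
  have hFij : ∀ i j, F i j = ∑ m, B m i * B m j := by
    intro i j
    rw [hB]
    simp [Matrix.mul_apply, Matrix.conjTranspose_apply]
  -- per-row inequality
  have key : ∀ ξ : Fin n → ℝ,
      -(lam * (ε * (∑ i, ξ i ^ 2) * (∑ i, η i ^ 2) + (1 / ε) * (∑ i, ξ i * η i) ^ 2)) ≤
        ∑ i, ∑ j, ∑ k, ∑ l, T i j k l * ξ i * ξ j * η k * η l := by
    intro ξ
    refine le_trans ?_ (hreg ξ η)
    have ha : (0:ℝ) ≤ ∑ i, ξ i ^ 2 := Finset.sum_nonneg fun i _ => sq_nonneg _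
    have hb : (0:ℝ) ≤ ∑ i, η i ^ 2 := Finset.sum_nonneg fun i _ => sq_nonneg _
    set a := ∑ i, ξ i ^ 2
    set b := ∑ i, η i ^ 2
    set c := ∑ i, ξ i * η i
    have hab : (Real.sqrt a * Real.sqrt b) ^ 2 = a * b := by
      rw [mul_pow, Real.sq_sqrt ha, Real.sq_sqrt hb]
    have hcc : |c| ^ 2 = c ^ 2 := sq_abs c
    have h2' : 2 * (Real.sqrt a * Real.sqrt b) * |c| * ε ≤ ε * ε * (a * b) + c ^ 2 := by
      nlinarith [sq_nonneg (ε * (Real.sqrt a * Real.sqrt b) - |c|), hab, hcc]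
    have h2 : 2 * (Real.sqrt a * Real.sqrt b) * |c| ≤ ε * (a * b) + (1 / ε) * c ^ 2 := by
      have hrw : ε * (a * b) + (1 / ε) * c ^ 2 = (ε * ε * (a * b) + c ^ 2) / ε := by
        field_simp
      rw [hrw, le_div_iff₀ hε]
      exact h2'
    have hmul := mul_le_mul_of_nonneg_left h2 hlam
    linarith [hmul]
  -- rewrite the quadruple sum
  have hsum : ∑ i, ∑ j, ∑ k, ∑ l, F i j * T i j k l * η k * η l
      = ∑ m, ∑ i, ∑ j, ∑ k, ∑ l, T i j k l * B m i * B m j * η k * η l := by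
    rw [← pull5 (fun i j k l m => T i j k l * B m i * B m j * η k * η l)]
    refine Finset.sum_congr rfl fun i _ => Finset.sum_congr rfl fun j _ =>
      Finset.sum_congr rfl fun k _ => Finset.sum_congr rfl fun l _ => ?_
    rw [hFij i j, Finset.sum_mul, Finset.sum_mul, Finset.sum_mul]
    exact Finset.sum_congr rfl fun m _ => by ring
  have htr : Matrix.trace F = ∑ m, ∑ i, B m i ^ 2 := by
    rw [Finset.sum_comm]
    unfold Matrix.trace Matrix.diag
    exact Finset.sum_congr rfl fun i _ => by
      rw [hFij i i]; exact Finset.sum_congr rfl fun m _ => (sq _).symm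
  have hq : ∑ i, ∑ j, F i j * η i * η j = ∑ m, (∑ i, B m i * η i) ^ 2 := by
    calc ∑ i, ∑ j, F i j * η i * η j
        = ∑ i, ∑ j, ∑ m, B m i * B m j * η i * η j := by
          refine Finset.sum_congr rfl fun i _ => Finset.sum_congr rfl fun j _ => ?_
          rw [hFij i j, Finset.sum_mul, Finset.sum_mul]
      _ = ∑ m, ∑ i, ∑ j, B m i * B m j * η i * η j :=
          pull3 (fun i j m => B m i * B m j * η i * η j)
      _ = ∑ m, (∑ i, B m i * η i) ^ 2 := by
          refine Finset.sum_congr rfl fun m _ => ?_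
          rw [sq, Finset.sum_mul_sum]
          exact Finset.sum_congr rfl fun i _ => Finset.sum_congr rfl fun j _ => by ring
  rw [hsum, htr, hq]
  calc -(lam * (ε * (∑ m, ∑ i, B m i ^ 2) * (∑ i, η i ^ 2) +
          (1 / ε) * ∑ m, (∑ i, B m i * η i) ^ 2))
      = ∑ m, -(lam * (ε * (∑ i, B m i ^ 2) * (∑ i, η i ^ 2) +
          (1 / ε) * (∑ i, B m i * η i) ^ 2)) := by
        have e1 : ε * (∑ m, ∑ i, B m i ^ 2) * (∑ i, η i ^ 2)
            = ∑ m, ε * (∑ i, B m i ^ 2) * (∑ i, η i ^ 2) := by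
          rw [mul_comm ε _, Finset.sum_mul, Finset.sum_mul]
          exact Finset.sum_congr rfl fun m _ => by ring
        have e2 : (1 / ε) * ∑ m, (∑ i, B m i * η i) ^ 2
            = ∑ m, (1 / ε) * (∑ i, B m i * η i) ^ 2 := Finset.mul_sum _ _ _
        rw [e1, e2, ← Finset.sum_add_distrib, Finset.mul_sum, ← Finset.sum_neg_distrib]
    _ ≤ _ := Finset.sum_le_sum fun m _ => key (B m)
end

section
/- Let n ≥ 1, λ̄ ≥ 0, and let T = (T^{kl}_{ij}) be a real array symmetric in (i,j) and in (k,l) such that Σ T^{kl}_{ij} ξ_i ξ_j η_k η_l ≥ −2λ̄|ξ||η||ξ·η| for all ξ, η ∈ ℝ^n. Then for every positive semidefinite symmetric matrix F = (F^{ij}), every q ∈ ℝ^n, every δ̄ > 0 and every constant K ≥ λ̄²|q|²/(2δ̄), one has δ̄·tr(F) + (1/2)·Σ_{i,j,k,l} F^{ij} T^{kl}_{ij} q_k q_l + K·Σ_{i,j} F^{ij} q_i q_j ≥ (δ̄/2)·tr(F). (This is the key absorption step, inequality (2.7), in the barrier construction of Section 2.) -/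
open scoped BigOperators

private lemma swap3 {n : ℕ} (g : Fin n → Fin n → Fin n → ℝ) :
    (∑ k, ∑ l, ∑ m, g k l m) = ∑ m, ∑ k, ∑ l, g k l m := by
  rw [show (∑ k, ∑ l, ∑ m, g k l m) = ∑ k, ∑ m, ∑ l, g k l m from
    Finset.sum_congr rfl fun k _ => Finset.sum_comm]
  exact Finset.sum_comm

private lemma swap4 {n : ℕ} (g : Fin n → Fin n → Fin n → Fin n → ℝ) :
    (∑ j, ∑ k, ∑ l, ∑ m, g j k l m) = ∑ m, ∑ j, ∑ k, ∑ l, g j k l m := by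
  rw [show (∑ j, ∑ k, ∑ l, ∑ m, g j k l m) = ∑ j, ∑ m, ∑ k, ∑ l, g j k l m from
    Finset.sum_congr rfl fun j _ => swap3 (g j)]
  exact Finset.sum_comm

private lemma swap5 {n : ℕ} (g : Fin n → Fin n → Fin n → Fin n → Fin n → ℝ) :
    (∑ i, ∑ j, ∑ k, ∑ l, ∑ m, g i j k l m) = ∑ m, ∑ i, ∑ j, ∑ k, ∑ l, g i j k l m := by
  rw [show (∑ i, ∑ j, ∑ k, ∑ l, ∑ m, g i j k l m) = ∑ i, ∑ m, ∑ j, ∑ k, ∑ l, g i j k l m from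
    Finset.sum_congr rfl fun i _ => swap4 (g i)]
  exact Finset.sum_comm

/-- the key absorption step, inequality (2.7), in the barrier
construction of Section 2. -/
theorem regular_absorption_inequality
    (n : ℕ) (hn : 1 ≤ n)
    (lam : ℝ) (hlam : 0 ≤ lam)
    (T : Fin n → Fin n → Fin n → Fin n → ℝ)
    (hsym₁ : ∀ i j k l, T i j k l = T j i k l)
    (hsym₂ : ∀ i j k l, T i j k l = T i j l k)
    (hreg : ∀ ξ η : Fin n → ℝ,
      -(2 * lam * Real.sqrt (∑ i, ξ i ^ 2) * Real.sqrt (∑ i, η i ^ 2) *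
          |∑ i, ξ i * η i|) ≤
        ∑ i, ∑ j, ∑ k, ∑ l, T i j k l * ξ i * ξ j * η k * η l) :
    ∀ F : Matrix (Fin n) (Fin n) ℝ, F.PosSemidef →
      ∀ q : Fin n → ℝ, ∀ δbar : ℝ, 0 < δbar →
        ∀ K : ℝ, lam ^ 2 * (∑ i, q i ^ 2) / (2 * δbar) ≤ K →
          (δbar / 2) * Matrix.trace F ≤
            δbar * Matrix.trace F +
              (1 / 2) * (∑ i, ∑ j, ∑ k, ∑ l, F i j * T i j k l * q k * q l) +
              K * ∑ i, ∑ j, F i j * q i * q j := by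
  intro F hF q δbar hδ K hK
  obtain ⟨A, hA⟩ : ∃ B : Matrix (Fin n) (Fin n) ℝ, F = Matrix.conjTranspose B * B := by
    open scoped MatrixOrder Matrix.Norms.L2Operator in
    exact CStarAlgebra.nonneg_iff_eq_star_mul_self.mp hF.nonneg
  have hFij : ∀ i j, F i j = ∑ m, A m i * A m j := by
    intro i j
    rw [hA]
    simp [Matrix.mul_apply, Matrix.conjTranspose_apply]
  -- per-vector inequality
  have key : ∀ v : Fin n → ℝ,
      0 ≤ δbar / 2 * (∑ i, v i ^ 2)
        + (1 / 2) * (∑ i, ∑ j, ∑ k, ∑ l, T i j k l * v i * v j * q k * q l)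
        + K * (∑ i, v i * q i) ^ 2 := by
    intro v
    have h1 := hreg v q
    set a := Real.sqrt (∑ i, v i ^ 2) with ha_def
    set b := Real.sqrt (∑ i, q i ^ 2) with hb_def
    set c := |∑ i, v i * q i| with hc_def
    have ha : 0 ≤ a := Real.sqrt_nonneg _
    have hc : 0 ≤ c := abs_nonneg _
    have ha2 : a ^ 2 = ∑ i, v i ^ 2 := Real.sq_sqrt (by positivity)
    have hb2 : b ^ 2 = ∑ i, q i ^ 2 := Real.sq_sqrt (by positivity)
    have hc2 : c ^ 2 = (∑ i, v i * q i) ^ 2 := sq_abs _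
    have hK' : lam ^ 2 * b ^ 2 ≤ 2 * δbar * K := by
      rw [hb2]
      have := (div_le_iff₀ (by positivity : (0:ℝ) < 2 * δbar)).mp hK
      linarith [this]
    rw [← ha2, ← hc2]
    nlinarith [sq_nonneg (δbar * a - lam * b * c),
      mul_nonneg (sub_nonneg.mpr hK') (sq_nonneg c),
      mul_le_mul_of_nonneg_left h1 hδ.le, mul_pos hδ hδ, sq_nonneg c]
  -- sum over decomposition
  have e1 : Matrix.trace F = ∑ m, ∑ i, (A m i) ^ 2 := by
    rw [Matrix.trace]
    rw [show (∑ i, Matrix.diag F i) = ∑ i, ∑ m, (A m i) ^ 2 from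
      Finset.sum_congr rfl fun i _ => by simp [Matrix.diag, hFij i i, sq]]
    exact Finset.sum_comm
  have e2 : (∑ i, ∑ j, ∑ k, ∑ l, F i j * T i j k l * q k * q l)
      = ∑ m, ∑ i, ∑ j, ∑ k, ∑ l, T i j k l * A m i * A m j * q k * q l := by
    rw [show (∑ i, ∑ j, ∑ k, ∑ l, F i j * T i j k l * q k * q l)
        = ∑ i, ∑ j, ∑ k, ∑ l, ∑ m, T i j k l * A m i * A m j * q k * q l from
      Finset.sum_congr rfl fun i _ => Finset.sum_congr rfl fun j _ =>
        Finset.sum_congr rfl fun k _ => Finset.sum_congr rfl fun l _ => by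
          rw [hFij i j, Finset.sum_mul, Finset.sum_mul, Finset.sum_mul]
          exact Finset.sum_congr rfl fun m _ => by ring]
    exact swap5 _
  have e3 : (∑ i, ∑ j, F i j * q i * q j) = ∑ m, (∑ i, A m i * q i) ^ 2 := by
    rw [show (∑ i, ∑ j, F i j * q i * q j)
        = ∑ i, ∑ j, ∑ m, (A m i * q i) * (A m j * q j) from
      Finset.sum_congr rfl fun i _ => Finset.sum_congr rfl fun j _ => by
        rw [hFij i j, Finset.sum_mul, Finset.sum_mul]
        exact Finset.sum_congr rfl fun m _ => by ring]
    rw [swap3]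
    refine Finset.sum_congr rfl fun m _ => ?_
    rw [sq, Finset.sum_mul_sum]
  have total : 0 ≤ δbar / 2 * Matrix.trace F
      + (1 / 2) * (∑ i, ∑ j, ∑ k, ∑ l, F i j * T i j k l * q k * q l)
      + K * ∑ i, ∑ j, F i j * q i * q j := by
    rw [e1, e2, e3, Finset.mul_sum, Finset.mul_sum, Finset.mul_sum,
      ← Finset.sum_add_distrib, ← Finset.sum_add_distrib]
    refine Finset.sum_nonneg fun m _ => ?_
    have := key (fun i => A m i)
    simpa using this
  linarith [total]
end

section
/- Let Ω ⊂ ℝ^n be a bounded C¹ domain with unit inner normal ν, let u ∈ C¹(Ω̄) with M = sup_Ω|u|, and let G ∈ C²(∂Ω×ℝ×ℝ^n) satisfy the uniform obliqueness (OB) with constant β₀ > 0 and the uniform tangential concavity (TC) with constant γ₀ > 0. If x ∈ ∂Ω and G(x, u(x), Du(x)) = 0, then D_ν u(x) ≥ −C where C = (1/β₀)·[ sup{|G(y,z,0)| : y ∈ ∂Ω, |z| ≤ M} + sup{|G_p(y,z,0)| : y ∈ ∂Ω, |z| ≤ M}² / (2γ₀) ]. (The boundary normal-derivative lower bound established by the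 second-order Taylor expansion in the proof of Lemma 4.1.) -/
open scoped BigOperators
open Set

noncomputable section

lemma descent_le (f f' : ℝ → ℝ) (hf : ∀ t, HasDerivAt f (f' t) t) (c : ℝ)
    (hc : ∀ t, f' t ≤ c) : f 1 ≤ f 0 + c := by
  have hF : ∀ t : ℝ, HasDerivAt (fun s => f s - c * s) (f' t - c) t := by
    intro t
    simpa using (hf t).fun_sub ((hasDerivAt_id t).const_mul c)
  have hanti : AntitoneOn (fun s => f s - c * s) (Icc (0:ℝ) 1) := by
    apply antitoneOn_of_deriv_nonpos (convex_Icc 0 1)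
    · exact fun t _ => (hF t).continuousAt.continuousWithinAt
    · exact fun t _ => (hF t).differentiableAt.differentiableWithinAt
    · intro t _
      rw [(hF t).deriv]
      linarith [hc t]
  have h := hanti (Set.left_mem_Icc.mpr zero_le_one) (Set.right_mem_Icc.mpr zero_le_one)
      zero_le_one
  simp only [mul_one, mul_zero, sub_zero] at h
  linarith

lemma taylor2_le (f f' f'' : ℝ → ℝ)
    (hf : ∀ t, HasDerivAt f (f' t) t) (hf' : ∀ t, HasDerivAt f' (f'' t) t)
    (K : ℝ) (hK : ∀ t, f'' t ≤ -K) : f 1 ≤ f 0 + f' 0 - K / 2 := by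
  have h1 : ∀ t ∈ Icc (0:ℝ) 1, f' t ≤ f' 0 - K * t := by
    have hg : ∀ s : ℝ, HasDerivAt (fun r => f' r + K * r) (f'' s + K) s := fun s => by
      simpa using (hf' s).fun_add ((hasDerivAt_id s).const_mul K)
    have hanti : AntitoneOn (fun r => f' r + K * r) (Icc (0:ℝ) 1) := by
      apply antitoneOn_of_deriv_nonpos (convex_Icc 0 1)
      · exact fun s _ => (hg s).continuousAt.continuousWithinAt
      · exact fun s _ => (hg s).differentiableAt.differentiableWithinAt
      · intro s _; rw [(hg s).deriv]; linarith [hK s]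
    intro t ht
    have h := hanti (Set.left_mem_Icc.mpr zero_le_one) ht ht.1
    simp only [mul_zero, add_zero] at h
    linarith
  have hF : ∀ s : ℝ, HasDerivAt (fun r => f r - f' 0 * r + K * r ^ 2 / 2)
      (f' s - f' 0 + K * s) s := by
    intro s
    have h2 : HasDerivAt (fun r : ℝ => K * r ^ 2 / 2) (K * s) s := by
      have h3 := ((hasDerivAt_pow 2 s).const_mul K).div_const 2
      refine h3.congr_deriv ?_
      push_cast
      ring
    have h4 := ((hf s).fun_sub ((hasDerivAt_id s).const_mul (f' 0))).fun_add h2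
    simpa using h4
  have hanti : AntitoneOn (fun r => f r - f' 0 * r + K * r ^ 2 / 2) (Icc (0:ℝ) 1) := by
    apply antitoneOn_of_deriv_nonpos (convex_Icc 0 1)
    · exact fun s _ => (hF s).continuousAt.continuousWithinAt
    · exact fun s _ => (hF s).differentiableAt.differentiableWithinAt
    · intro s hs
      rw [(hF s).deriv]
      rw [interior_Icc] at hs
      have := h1 s ⟨hs.1.le, hs.2.le⟩
      linarith
  have h := hanti (Set.left_mem_Icc.mpr zero_le_one) (Set.right_mem_Icc.mpr zero_le_one)
      zero_le_one
  simp only [mul_one, mul_zero, sub_zero, one_pow, zero_pow, add_zero] at h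
  linarith

lemma line_hasDerivAt {E : Type*} [NormedAddCommGroup E] [NormedSpace ℝ E]
    (φ : E → ℝ) (hφ : Differentiable ℝ φ) (q v : E) (t : ℝ) :
    HasDerivAt (fun s : ℝ => φ (q + s • v)) (fderiv ℝ φ (q + t • v) v) t := by
  have h1 : HasDerivAt (fun s : ℝ => q + s • v) v t := by
    simpa using (((hasDerivAt_id t).smul_const v).const_add q)
  exact (hφ (q + t • v)).hasFDerivAt.comp_hasDerivAt t h1

lemma clm_apply_eq_sum {m : ℕ} (L : (Fin m → ℝ) →L[ℝ] ℝ) (v : Fin m → ℝ) :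
    L v = ∑ i, v i * L (Pi.single i 1) := by
  have hv : v = ∑ i, v i • (Pi.single i 1 : Fin m → ℝ) := by
    funext j
    simp [Finset.sum_apply, Pi.single_apply]
  calc L v = L (∑ i, v i • (Pi.single i 1 : Fin m → ℝ)) := by rw [← hv]
    _ = ∑ i, v i * L (Pi.single i 1) := by
        rw [map_sum]
        simp [smul_eq_mul]

lemma bddAbove_S0 (n : ℕ) (Ω : Set (EuclideanSpace ℝ (Fin n)))
    (hΩb : Bornology.IsBounded Ω) (M : ℝ)
    (G : EuclideanSpace ℝ (Fin n) → ℝ → (Fin n → ℝ) → ℝ)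
    (hG : ContDiff ℝ 2 (fun q : EuclideanSpace ℝ (Fin n) × ℝ × (Fin n → ℝ) =>
        G q.1 q.2.1 q.2.2)) :
    BddAbove {y : ℝ | ∃ x' ∈ frontier Ω, ∃ z : ℝ, |z| ≤ M ∧ y = |G x' z 0|} := by
  have hfrc : IsCompact (frontier Ω) :=
    Metric.isCompact_of_isClosed_isBounded isClosed_frontier
      (hΩb.closure.subset frontier_subset_closure)
  have hK : IsCompact ((frontier Ω) ×ˢ Icc (-M) M) := hfrc.prod isCompact_Icc
  have hc₀ : Continuous fun q : EuclideanSpace ℝ (Fin n) × ℝ => |G q.1 q.2 0| := by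
    have h1 : Continuous fun q : EuclideanSpace ℝ (Fin n) × ℝ =>
        (fun q : EuclideanSpace ℝ (Fin n) × ℝ × (Fin n → ℝ) => G q.1 q.2.1 q.2.2)
          (q.1, q.2, (0 : Fin n → ℝ)) :=
      hG.continuous.comp (continuous_fst.prodMk (continuous_snd.prodMk continuous_const))
    exact h1.abs
  obtain ⟨C, hC⟩ := hK.exists_bound_of_continuousOn hc₀.continuousOn
  refine ⟨C, ?_⟩
  rintro y ⟨x', hx', z', hz', rfl⟩
  have := hC (x', z') ⟨hx', abs_le.mp hz'⟩
  simpa [Real.norm_eq_abs, abs_abs] using this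

lemma deriv_eq_fderiv_line (n : ℕ)
    (G : EuclideanSpace ℝ (Fin n) → ℝ → (Fin n → ℝ) → ℝ)
    (hG : ContDiff ℝ 2 (fun q : EuclideanSpace ℝ (Fin n) × ℝ × (Fin n → ℝ) =>
        G q.1 q.2.1 q.2.2))
    (x' : EuclideanSpace ℝ (Fin n)) (z' : ℝ) (v : Fin n → ℝ) :
      deriv (fun t : ℝ => G x' z' (t • v)) 0
        = fderiv ℝ (fun q : EuclideanSpace ℝ (Fin n) × ℝ × (Fin n → ℝ) => G q.1 q.2.1 q.2.2)
            (x', z', 0) ((0 : EuclideanSpace ℝ (Fin n)), (0 : ℝ), v) := by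
  set F : EuclideanSpace ℝ (Fin n) × ℝ × (Fin n → ℝ) → ℝ :=
    fun q => G q.1 q.2.1 q.2.2 with hFdef
  have hFd : Differentiable ℝ F := hG.differentiable (by norm_num)
  have hl := line_hasDerivAt F hFd ((x', z', 0) : EuclideanSpace ℝ (Fin n) × ℝ × (Fin n → ℝ))
    ((0, 0, v)) 0
  have hfun : (fun s : ℝ => F (((x', z', 0) : EuclideanSpace ℝ (Fin n) × ℝ × (Fin n → ℝ))
      + s • ((0, 0, v) : EuclideanSpace ℝ (Fin n) × ℝ × (Fin n → ℝ))))
      = fun s : ℝ => G x' z' (s • v) := by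
    funext s
    simp [hFdef, Prod.ext_iff]
  rw [hfun] at hl
  have := hl.deriv
  simpa using this

lemma bddAbove_S1 (n : ℕ) (Ω : Set (EuclideanSpace ℝ (Fin n)))
    (hΩb : Bornology.IsBounded Ω) (M : ℝ)
    (G : EuclideanSpace ℝ (Fin n) → ℝ → (Fin n → ℝ) → ℝ)
    (hG : ContDiff ℝ 2 (fun q : EuclideanSpace ℝ (Fin n) × ℝ × (Fin n → ℝ) =>
        G q.1 q.2.1 q.2.2)) :
    BddAbove {y : ℝ | ∃ x' ∈ frontier Ω, ∃ z : ℝ, |z| ≤ M ∧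
      y = Real.sqrt (∑ i,
        (deriv (fun t : ℝ => G x' z (t • (Pi.single i 1 : Fin n → ℝ))) 0) ^ 2)} := by
  set F : EuclideanSpace ℝ (Fin n) × ℝ × (Fin n → ℝ) → ℝ :=
    fun q => G q.1 q.2.1 q.2.2 with hFdef
  have hfrc : IsCompact (frontier Ω) :=
    Metric.isCompact_of_isClosed_isBounded isClosed_frontier
      (hΩb.closure.subset frontier_subset_closure)
  have hK : IsCompact ((frontier Ω) ×ˢ Icc (-M) M) := hfrc.prod isCompact_Icc
  have hc₁ : Continuous fun q : EuclideanSpace ℝ (Fin n) × ℝ =>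
      Real.sqrt (∑ i, (fderiv ℝ F (q.1, q.2, 0) ((0 : EuclideanSpace ℝ (Fin n)), (0 : ℝ),
        (Pi.single i 1 : Fin n → ℝ))) ^ 2) := by
    have h0 : Continuous fun q : EuclideanSpace ℝ (Fin n) × ℝ =>
        fderiv ℝ F (q.1, q.2, (0 : Fin n → ℝ)) :=
      (hG.continuous_fderiv (by norm_num)).comp
        (continuous_fst.prodMk (continuous_snd.prodMk continuous_const))
    apply Real.continuous_sqrt.comp
    apply continuous_finset_sum
    intro i _
    exact (h0.clm_apply continuous_const).pow 2
  obtain ⟨C, hC⟩ := hK.exists_bound_of_continuousOn hc₁.continuousOn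
  refine ⟨C, ?_⟩
  rintro y ⟨x', hx', z', hz', rfl⟩
  have h1 := hC (x', z') ⟨hx', abs_le.mp hz'⟩
  rw [Real.norm_eq_abs, abs_of_nonneg (Real.sqrt_nonneg _)] at h1
  refine le_trans (le_of_eq ?_) h1
  congr 1
  exact Finset.sum_congr rfl fun i _ => by rw [deriv_eq_fderiv_line n G hG]

noncomputable def pgrad (n : ℕ) (u : EuclideanSpace ℝ (Fin n) → ℝ)
    (x : EuclideanSpace ℝ (Fin n)) : Fin n → ℝ :=
  fun i => fderiv ℝ u x (EuclideanSpace.single i 1)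

noncomputable def toEuc (n : ℕ) (v : Fin n → ℝ) : EuclideanSpace ℝ (Fin n) :=
  (EuclideanSpace.equiv (Fin n) ℝ).symm v

def IsUnitInnerNormal (n : ℕ) (Ω : Set (EuclideanSpace ℝ (Fin n)))
    (ν : EuclideanSpace ℝ (Fin n) → Fin n → ℝ) : Prop :=
  (∀ x ∈ frontier Ω, (∑ i, ν x i ^ 2) = 1) ∧
  (∀ x ∈ frontier Ω, ∃ ε > 0, ∀ t : ℝ, 0 < t → t < ε → x + t • toEuc n (ν x) ∈ Ω) ∧
  (∀ x ∈ frontier Ω, ∀ γ : ℝ → EuclideanSpace ℝ (Fin n),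
    (∀ t : ℝ, γ t ∈ frontier Ω) → γ 0 = x →
    ∀ w : EuclideanSpace ℝ (Fin n), HasDerivAt γ w 0 → (∑ i, w i * ν x i) = 0)

set_option maxHeartbeats 1000000 in
/-- the boundary normal-derivative lower bound from the
second-order Taylor expansion in the proof of Lemma 4.1. -/
theorem normal_derivative_lower_bound
    (n : ℕ) (Ω : Set (EuclideanSpace ℝ (Fin n)))
    (hΩo : IsOpen Ω) (hΩb : Bornology.IsBounded Ω)
    (ν : EuclideanSpace ℝ (Fin n) → Fin n → ℝ)
    (hν : IsUnitInnerNormal n Ω ν)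
    (u : EuclideanSpace ℝ (Fin n) → ℝ) (hu : ContDiff ℝ 1 u)
    (M : ℝ) (hM : ∀ x ∈ closure Ω, |u x| ≤ M)
    (G : EuclideanSpace ℝ (Fin n) → ℝ → (Fin n → ℝ) → ℝ)
    (hG : ContDiff ℝ 2 (fun q : EuclideanSpace ℝ (Fin n) × ℝ × (Fin n → ℝ) =>
        G q.1 q.2.1 q.2.2))
    (β₀ γ₀ : ℝ) (hβ₀ : 0 < β₀) (hγ₀ : 0 < γ₀)
    -- (OB): uniform obliqueness
    (hOB : ∀ x ∈ frontier Ω, ∀ z : ℝ, |z| ≤ M → ∀ p : Fin n → ℝ,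
      β₀ ≤ ∑ i, (deriv (fun t : ℝ => G x z (p + t • (Pi.single i 1 : Fin n → ℝ))) 0) * ν x i)
    -- (TC): uniform tangential concavity
    (hTC : ∀ x ∈ frontier Ω, ∀ z : ℝ, |z| ≤ M → ∀ p τ : Fin n → ℝ,
      (∑ i, τ i * ν x i) = 0 →
      iteratedDeriv 2 (fun t : ℝ => G x z (p + t • τ)) 0 ≤ -γ₀ * ∑ i, τ i ^ 2)
    (x : EuclideanSpace ℝ (Fin n)) (hx : x ∈ frontier Ω)
    (hbc : G x (u x) (pgrad n u x) = 0) :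
    -(1 / β₀ *
        (sSup {y : ℝ | ∃ x' ∈ frontier Ω, ∃ z : ℝ, |z| ≤ M ∧ y = |G x' z 0|} +
          (sSup {y : ℝ | ∃ x' ∈ frontier Ω, ∃ z : ℝ, |z| ≤ M ∧
              y = Real.sqrt (∑ i,
                (deriv (fun t : ℝ => G x' z (t • (Pi.single i 1 : Fin n → ℝ))) 0) ^ 2)}) ^ 2 /
            (2 * γ₀))) ≤
      ∑ i, pgrad n u x i * ν x i := by
  classical
  set p : Fin n → ℝ := pgrad n u x with hpdef
  set uz : ℝ := u x with huz
  have hzM : |uz| ≤ M := hM x (frontier_subset_closure hx)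
  set φ : (Fin n → ℝ) → ℝ := fun q => G x uz q with hφdef
  have hφ2 : ContDiff ℝ 2 φ := by
    have hemb : ContDiff ℝ 2 (fun q : Fin n → ℝ =>
        ((x, uz, q) : EuclideanSpace ℝ (Fin n) × ℝ × (Fin n → ℝ))) :=
      contDiff_const.prodMk (contDiff_const.prodMk contDiff_id)
    exact hG.comp hemb
  have hφd : Differentiable ℝ φ := hφ2.differentiable (by norm_num)
  set Dφ : (Fin n → ℝ) → (Fin n → ℝ) →L[ℝ] ℝ := fderiv ℝ φ with hDφdef
  -- first-order derivative along coordinate lines based at q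
  have hcoord : ∀ (q : Fin n → ℝ) (i : Fin n),
      deriv (fun t : ℝ => G x uz (q + t • (Pi.single i 1 : Fin n → ℝ))) 0
        = Dφ q (Pi.single i 1) := by
    intro q i
    have h := (line_hasDerivAt φ hφd q (Pi.single i 1) 0).deriv
    simpa using h
  set χ : ℝ := ∑ i, p i * ν x i with hχdef
  set τ : Fin n → ℝ := fun i => p i - χ * ν x i with hτdef
  have hνsq : (∑ i, ν x i ^ 2) = 1 := hν.1 x hx
  have hτν : (∑ i, τ i * ν x i) = 0 := by
    have h1 : ∀ i ∈ Finset.univ, τ i * ν x i = p i * ν x i - χ * ν x i ^ 2 := by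
      intro i _
      simp only [hτdef]
      ring
    rw [Finset.sum_congr rfl h1, Finset.sum_sub_distrib, ← Finset.mul_sum, hνsq]
    simp [hχdef]
  set T : ℝ := ∑ i, τ i ^ 2 with hTdef
  have hT0 : 0 ≤ T := Finset.sum_nonneg fun i _ => sq_nonneg _
  -- tangential Taylor expansion
  set g : ℝ → ℝ := fun s => φ (s • τ) with hgdef
  set g' : ℝ → ℝ := fun s => Dφ (s • τ) τ with hg'def
  have hg : ∀ s, HasDerivAt g (g' s) s := by
    intro s
    have h := line_hasDerivAt φ hφd 0 τ s
    simpa [hgdef, hg'def] using h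
  set ψ : (Fin n → ℝ) → ℝ := fun w => Dφ w τ with hψdef
  have hψ1 : ContDiff ℝ 1 ψ := (hφ2.fderiv_right (by norm_num)).clm_apply contDiff_const
  have hψd : Differentiable ℝ ψ := hψ1.differentiable (by norm_num)
  set g'' : ℝ → ℝ := fun s => fderiv ℝ ψ (s • τ) τ with hg''def
  have hg' : ∀ s, HasDerivAt g' (g'' s) s := by
    intro s
    have h := line_hasDerivAt ψ hψd 0 τ s
    simpa [hg'def, hg''def, hψdef] using h
  have hg''le : ∀ s, g'' s ≤ -(γ₀ * T) := by
    intro s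
    have hTC' := hTC x hx uz hzM (s • τ) τ hτν
    have hit : iteratedDeriv 2 (fun t : ℝ => G x uz (s • τ + t • τ)) 0 = g'' s := by
      rw [show (2 : ℕ) = 1 + 1 from rfl, iteratedDeriv_succ, iteratedDeriv_one]
      have hd1 : deriv (fun t : ℝ => G x uz (s • τ + t • τ))
          = fun t : ℝ => ψ (s • τ + t • τ) := by
        funext t
        exact (line_hasDerivAt φ hφd (s • τ) τ t).deriv
      rw [hd1]
      have hd2 := (line_hasDerivAt ψ hψd (s • τ) τ 0).deriv
      simpa [hg''def] using hd2
    rw [hit] at hTC'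
    rw [neg_mul] at hTC'
    exact hTC'
  have hTan : φ τ ≤ φ 0 + Dφ 0 τ - γ₀ * T / 2 := by
    have h := taylor2_le g g' g'' hg hg' (γ₀ * T) hg''le
    simpa [hgdef, hg'def] using h
  -- bounds on the suprema
  have bdd₀ := bddAbove_S0 n Ω hΩb M G hG
  have bdd₁ := bddAbove_S1 n Ω hΩb M G hG
  set S₀ : ℝ := sSup {y : ℝ | ∃ x' ∈ frontier Ω, ∃ z : ℝ, |z| ≤ M ∧ y = |G x' z 0|} with hS₀def
  set S₁ : ℝ := sSup {y : ℝ | ∃ x' ∈ frontier Ω, ∃ z : ℝ, |z| ≤ M ∧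
      y = Real.sqrt (∑ i,
        (deriv (fun t : ℝ => G x' z (t • (Pi.single i 1 : Fin n → ℝ))) 0) ^ 2)} with hS₁def
  have hS₀ge : |G x uz 0| ≤ S₀ := le_csSup bdd₀ ⟨x, hx, uz, hzM, rfl⟩
  set A : ℝ := Real.sqrt (∑ i,
      (deriv (fun t : ℝ => G x uz (t • (Pi.single i 1 : Fin n → ℝ))) 0) ^ 2) with hAdef
  have hS₁ge : A ≤ S₁ := le_csSup bdd₁ ⟨x, hx, uz, hzM, rfl⟩
  have hA0 : 0 ≤ A := Real.sqrt_nonneg _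
  have hS₀0 : 0 ≤ S₀ := le_trans (abs_nonneg _) hS₀ge
  have hS₁0 : 0 ≤ S₁ := le_trans hA0 hS₁ge
  -- rewrite A via Dφ
  have hA2 : A ^ 2 = ∑ i, (Dφ 0 (Pi.single i 1)) ^ 2 := by
    rw [hAdef, Real.sq_sqrt (Finset.sum_nonneg fun i _ => sq_nonneg _)]
    apply Finset.sum_congr rfl
    intro i _
    have := hcoord 0 i
    rw [show (fun t : ℝ => G x uz ((0 : Fin n → ℝ) + t • (Pi.single i 1 : Fin n → ℝ)))
        = fun t : ℝ => G x uz (t • (Pi.single i 1 : Fin n → ℝ)) by funext t; rw [zero_add]] at this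
    rw [this]
  -- Cauchy-Schwarz
  have hcs : Dφ 0 τ ≤ A * Real.sqrt T := by
    have h1 : (∑ i, τ i * Dφ 0 (Pi.single i 1)) ^ 2
        ≤ (∑ i, τ i ^ 2) * ∑ i, (Dφ 0 (Pi.single i 1)) ^ 2 :=
      Finset.sum_mul_sq_le_sq_mul_sq _ _ _
    have h2 : Dφ 0 τ = ∑ i, τ i * Dφ 0 (Pi.single i 1) := clm_apply_eq_sum _ _
    have h3 : Dφ 0 τ ≤ |Dφ 0 τ| := le_abs_self _
    have h4 : |Dφ 0 τ| = Real.sqrt ((Dφ 0 τ) ^ 2) := (Real.sqrt_sq_eq_abs _).symm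
    have h5 : Real.sqrt ((Dφ 0 τ) ^ 2)
        ≤ Real.sqrt ((∑ i, τ i ^ 2) * ∑ i, (Dφ 0 (Pi.single i 1)) ^ 2) := by
      apply Real.sqrt_le_sqrt
      rw [h2]
      exact h1
    have h6 : Real.sqrt ((∑ i, τ i ^ 2) * ∑ i, (Dφ 0 (Pi.single i 1)) ^ 2)
        = Real.sqrt T * A := by
      rw [Real.sqrt_mul hT0]
      congr 1
      rw [hAdef]
      congr 1
      apply Finset.sum_congr rfl
      intro i _
      have := hcoord 0 i
      rw [show (fun t : ℝ => G x uz ((0 : Fin n → ℝ) + t • (Pi.single i 1 : Fin n → ℝ)))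
          = fun t : ℝ => G x uz (t • (Pi.single i 1 : Fin n → ℝ)) by funext t; rw [zero_add]] at this
      rw [this]
    calc Dφ 0 τ ≤ |Dφ 0 τ| := h3
      _ = Real.sqrt ((Dφ 0 τ) ^ 2) := h4
      _ ≤ Real.sqrt ((∑ i, τ i ^ 2) * ∑ i, (Dφ 0 (Pi.single i 1)) ^ 2) := h5
      _ = Real.sqrt T * A := h6
      _ = A * Real.sqrt T := mul_comm _ _
  -- AM-GM
  have hAMGM : A * Real.sqrt T - γ₀ * T / 2 ≤ A ^ 2 / (2 * γ₀) := by
    have hsq : Real.sqrt T ^ 2 = T := Real.sq_sqrt hT0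
    have hsn : 0 ≤ Real.sqrt T := Real.sqrt_nonneg T
    have hkey2 : 2 * γ₀ * (A * Real.sqrt T) - γ₀ ^ 2 * T ≤ A ^ 2 := by
      nlinarith [sq_nonneg (A - γ₀ * Real.sqrt T), hsq]
    rw [le_div_iff₀ (by positivity : (0:ℝ) < 2 * γ₀)]
    nlinarith [hkey2]
  have hA2S : A ^ 2 ≤ S₁ ^ 2 := pow_le_pow_left₀ hA0 hS₁ge 2
  have hdivS : A ^ 2 / (2 * γ₀) ≤ S₁ ^ 2 / (2 * γ₀) :=
    (div_le_div_iff_of_pos_right (by linarith)).mpr hA2S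
  rcases le_or_gt 0 χ with hχpos | hχneg
  · -- easy case: normal derivative already nonnegative
    have hC0 : 0 ≤ 1 / β₀ * (S₀ + S₁ ^ 2 / (2 * γ₀)) := by
      apply mul_nonneg
      · positivity
      · have : 0 ≤ S₁ ^ 2 / (2 * γ₀) := by positivity
        linarith
    linarith
  · -- main case
    set w : Fin n → ℝ := χ • ν x with hwdef
    set h : ℝ → ℝ := fun t => φ (τ + t • w) with hhdef
    set h' : ℝ → ℝ := fun t => Dφ (τ + t • w) w with hh'def
    have hh : ∀ t, HasDerivAt h (h' t) t := fun t => line_hasDerivAt φ hφd τ w t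
    have hh'le : ∀ t, h' t ≤ χ * β₀ := by
      intro t
      have hOB' := hOB x hx uz hzM (τ + t • w)
      have hrw : ∀ i ∈ Finset.univ,
          deriv (fun s : ℝ => G x uz ((τ + t • w) + s • (Pi.single i 1 : Fin n → ℝ))) 0
            * ν x i = Dφ (τ + t • w) (Pi.single i 1) * ν x i := by
        intro i _
        rw [hcoord]
      rw [Finset.sum_congr rfl hrw] at hOB'
      have hexp : h' t = χ * ∑ i, Dφ (τ + t • w) (Pi.single i 1) * ν x i := by
        have h1 : Dφ (τ + t • w) w = χ * Dφ (τ + t • w) (ν x) := by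
          rw [hwdef, map_smul, smul_eq_mul]
        have h2 : Dφ (τ + t • w) (ν x) = ∑ i, ν x i * Dφ (τ + t • w) (Pi.single i 1) :=
          clm_apply_eq_sum _ _
        show Dφ (τ + t • w) w = χ * ∑ i, Dφ (τ + t • w) (Pi.single i 1) * ν x i
        rw [h1, h2]
        congr 1
        apply Finset.sum_congr rfl
        intro i _
        ring
      rw [hexp]
      have := mul_le_mul_of_nonpos_left hOB' (le_of_lt hχneg)
      linarith [this]
    have hdesc := descent_le h h' hh (χ * β₀) hh'le
    have hh1 : h 1 = 0 := by
      have hpw : τ + (1 : ℝ) • w = p := by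
        funext i
        simp only [hτdef, hwdef, Pi.add_apply, Pi.smul_apply, smul_eq_mul, one_mul]
        ring
      rw [hhdef]
      simp only [hpw]
      exact hbc
    have hh0 : h 0 = φ τ := by
      rw [hhdef]
      simp
    rw [hh1, hh0] at hdesc
    -- combine everything
    have hφ0 : φ 0 ≤ |G x uz 0| := le_abs_self _
    have hkey : -(χ * β₀) ≤ S₀ + S₁ ^ 2 / (2 * γ₀) := by
      have h1 : -(χ * β₀) ≤ φ τ := by linarith
      have h2 : φ τ ≤ S₀ + A * Real.sqrt T - γ₀ * T / 2 := by
        have := hTan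
        linarith [hcs, hS₀ge, hφ0]
      linarith [hAMGM, hdivS]
    have hβ' : -χ ≤ 1 / β₀ * (S₀ + S₁ ^ 2 / (2 * γ₀)) := by
      rw [one_div, inv_mul_eq_div, le_div_iff₀ hβ₀]
      linarith [hkey]
    linarith
end
end
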